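/- Consider the FEN-hedonic game with distance-based preferences on five players N = ℤ/5ℤ where each player k has the single friend k+1 and the two enemies k+2 and k+3 (enemies mutually indifferent). Then no coalition structure of this game is individually stable, and consequently no coalition structure is Nash stable. -/

import Mathlib

/-! Basic machinery: weak orders, linear extensions, Kendall-tau,
and the directed Hausdorff–Kendall-tau distance. -/

section Orders

variable {P : Type*}

/-- The strict part `x ▷ y` of a relation `R`. -/
def strictOf (R : P → P → Prop) (x y : P) : Prop := R x y ∧ ¬ R y x

/-- The indifference part `x ∼ y` of a relation `R`. -/
def indiffOf (R : P → P → Prop) (x y : P) : Prop := R x y ∧ R y x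

/-- `R` is a weak order (total preorder) on the finite set `S`. -/
structure IsWeakOrderOn (S : Finset P) (R : P → P → Prop) : Prop where
  refl : ∀ x ∈ S, R x x
  trans : ∀ x ∈ S, ∀ y ∈ S, ∀ z ∈ S, R x y → R y z → R x z
  total : ∀ x ∈ S, ∀ y ∈ S, R x y ∨ R y x

/-- `A` is a linear extension on `S` of the weak order `R`: a strict total
order on `S` which is consistent with the strict part of `R`. -/
structure IsLinExtOn (S : Finset P) (R : P → P → Prop) (A : P → P → Prop) : Prop where
  irrefl : ∀ x ∈ S, ¬ A x x
  trans : ∀ x ∈ S, ∀ y ∈ S, ∀ z ∈ S, A x y → A y z → A x z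
  total : ∀ x ∈ S, ∀ y ∈ S, x ≠ y → A x y ∨ A y x
  extend : ∀ x ∈ S, ∀ y ∈ S, strictOf R x y → A x y

/-- The Kendall-tau distance between two strict (linear) orders on `S`:
the number of pairs ordered oppositely by the two orders. -/
noncomputable def kendallTau (S : Finset P) (A B : P → P → Prop) : ℕ :=
  Set.ncard {p : P × P | p.1 ∈ S ∧ p.2 ∈ S ∧ A p.1 p.2 ∧ B p.2 p.1}

/-- The directed Hausdorff–Kendall-tau distance `→τ(R1,R2)` between weak orders on `S`:
the maximum over linear extensions `B` of `R2` of the minimum over linear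
extensions `A` of `R1` of `τ(A,B)`. -/
noncomputable def dirTau (S : Finset P) (R1 R2 : P → P → Prop) : ℕ :=
  sSup { n : ℕ | ∃ B : P → P → Prop, IsLinExtOn S R2 B ∧
    n = sInf { m : ℕ | ∃ A : P → P → Prop, IsLinExtOn S R1 A ∧ m = kendallTau S A B } }

/-- The (undirected) Hausdorff–Kendall-tau distance `τ*`. -/
noncomputable def hkTau (S : Finset P) (R1 R2 : P → P → Prop) : ℕ :=
  max (dirTau S R1 R2) (dirTau S R2 R1)

end Orders

/-! FEN-hedonic games with distance-based preferences. -/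

section Game

/-- A FEN preference for player `i`: disjoint sets of friends and enemies
(not containing `i`) together with weak orders on the friends and on the enemies. -/
structure FENPref (P : Type*) (i : P) where
  friends : Finset P
  enemies : Finset P
  Rp : P → P → Prop
  Rm : P → P → Prop
  disj : Disjoint friends enemies
  self_not_friend : i ∉ friends
  self_not_enemy : i ∉ enemies
  wo_p : IsWeakOrderOn friends Rp
  wo_m : IsWeakOrderOn enemies Rm

variable {P : Type*} {i : P}

/-- The weak order `⊵⁺_i` on `N⁺_i ∪ {i}`: the friends, ordered by `⊵_i`,
all strictly above `i`. -/
def FENPref.prefPlus (pr : FENPref P i) (x y : P) : Prop :=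
  (x ∈ pr.friends ∧ y ∈ pr.friends ∧ pr.Rp x y) ∨
  (x ∈ pr.friends ∧ y = i) ∨
  (x = i ∧ y = i)

/-- The weak order `⊵⁻_i` on `N⁻_i ∪ {i}`: `i` strictly above all enemies,
which are ordered by `⊵_i`. -/
def FENPref.prefMinus (pr : FENPref P i) (x y : P) : Prop :=
  (x = i ∧ y = i) ∨
  (x = i ∧ y ∈ pr.enemies) ∨
  (x ∈ pr.enemies ∧ y ∈ pr.enemies ∧ pr.Rm x y)

/-- The weak order `C⁺_i` on `N⁺_i ∪ {i}`: friends in `C` strictly above `i`,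
ordered by `⊵_i`; friends not in `C` strictly below `i`, ordered by the reverse of `⊵_i`. -/
def FENPref.coalPlus (pr : FENPref P i) (C : Finset P) (x y : P) : Prop :=
  (x ∈ pr.friends ∧ x ∈ C ∧ y ∈ pr.friends ∧ y ∈ C ∧ pr.Rp x y) ∨
  ((x ∈ pr.friends ∧ x ∈ C) ∧ (y = i ∨ (y ∈ pr.friends ∧ y ∉ C))) ∨
  (x = i ∧ (y = i ∨ (y ∈ pr.friends ∧ y ∉ C))) ∨
  (x ∈ pr.friends ∧ x ∉ C ∧ y ∈ pr.friends ∧ y ∉ C ∧ pr.Rp y x)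

/-- The weak order `C⁻_i` on `N⁻_i ∪ {i}`: enemies in `C` strictly above `i`,
ordered by the reverse of `⊵_i`; enemies not in `C` strictly below `i`, ordered by `⊵_i`. -/
def FENPref.coalMinus (pr : FENPref P i) (C : Finset P) (x y : P) : Prop :=
  (x ∈ pr.enemies ∧ x ∈ C ∧ y ∈ pr.enemies ∧ y ∈ C ∧ pr.Rm y x) ∨
  ((x ∈ pr.enemies ∧ x ∈ C) ∧ (y = i ∨ (y ∈ pr.enemies ∧ y ∉ C))) ∨
  (x = i ∧ (y = i ∨ (y ∈ pr.enemies ∧ y ∉ C))) ∨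
  (x ∈ pr.enemies ∧ x ∉ C ∧ y ∈ pr.enemies ∧ y ∉ C ∧ pr.Rm x y)

variable [DecidableEq P]

/-- `δ⁺(⊵_i, C) = →τ(⊵⁺_i, C⁺_i)`. -/
noncomputable def FENPref.deltaPlus (pr : FENPref P i) (C : Finset P) : ℕ :=
  dirTau (insert i pr.friends) pr.prefPlus (pr.coalPlus C)

/-- `δ⁻(⊵_i, C) = →τ(⊵⁻_i, C⁻_i)`. -/
noncomputable def FENPref.deltaMinus (pr : FENPref P i) (C : Finset P) : ℕ :=
  dirTau (insert i pr.enemies) pr.prefMinus (pr.coalMinus C)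

/-- `δ(⊵_i, C) = δ⁺(⊵_i, C) + δ⁻(⊵_i, C)`. -/
noncomputable def FENPref.delta (pr : FENPref P i) (C : Finset P) : ℕ :=
  pr.deltaPlus C + pr.deltaMinus C

end Game

/-! Coalition structures and stability notions. -/

section Structures

variable {P : Type*} [DecidableEq P] [Fintype P]

/-- A coalition structure: a partition of the player set into nonempty coalitions. -/
def IsCoalitionStructure (Γ : Finset (Finset P)) : Prop :=
  ∅ ∉ Γ ∧ ∀ x : P, ∃! C, C ∈ Γ ∧ x ∈ C

/-- `Γ` is Nash stable: no player `k` and no coalition `C ∈ Γ ∪ {∅}` such that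
`k` strictly prefers `C ∪ {k}` to `k`'s own coalition. -/
def NashStable (pr : ∀ k : P, FENPref P k) (Γ : Finset (Finset P)) : Prop :=
  ¬ ∃ (k : P) (Ck C : Finset P), Ck ∈ Γ ∧ k ∈ Ck ∧ (C ∈ Γ ∨ C = ∅) ∧
      (pr k).delta (insert k C) < (pr k).delta Ck

/-- `Γ` is individually stable: no Nash deviation where the deviating player
is moreover welcome in the new coalition. -/
def IndividuallyStable (pr : ∀ k : P, FENPref P k) (Γ : Finset (Finset P)) : Prop :=
  ¬ ∃ (k : P) (Ck C : Finset P), Ck ∈ Γ ∧ k ∈ Ck ∧ (C ∈ Γ ∨ C = ∅) ∧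
      (pr k).delta (insert k C) < (pr k).delta Ck ∧
      ∀ j ∈ C, (pr j).delta (insert k C) ≤ (pr j).delta C

/-- `Γ` is contractually individually stable: no individual-stability deviation
where the deviating player is moreover not bound to the former coalition. -/
def ContractuallyIndividuallyStable (pr : ∀ k : P, FENPref P k) (Γ : Finset (Finset P)) : Prop :=
  ¬ ∃ (k : P) (Ck C : Finset P), Ck ∈ Γ ∧ k ∈ Ck ∧ (C ∈ Γ ∨ C = ∅) ∧
      (pr k).delta (insert k C) < (pr k).delta Ck ∧
      (∀ j ∈ C, (pr j).delta (insert k C) ≤ (pr j).delta C) ∧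
      (∀ j ∈ Ck.erase k, (pr j).delta (Ck.erase k) ≤ (pr j).delta Ck)

/-- `Γ` is perfect: every player is in one of their most preferred coalitions. -/
def PerfectStructure (pr : ∀ k : P, FENPref P k) (Γ : Finset (Finset P)) : Prop :=
  ∀ k : P, ∀ Ck ∈ Γ, k ∈ Ck → ∀ C : Finset P, k ∈ C → (pr k).delta Ck ≤ (pr k).delta C

end Structures

/-! compute helpers -/

lemma nat_sSup_eq {T : Set ℕ} {v : ℕ} (h0 : v ∈ T) (h : ∀ n ∈ T, n = v) : sSup T = v := by
  rw [show T = {v} from Set.eq_singleton_iff_unique_mem.mpr ⟨h0, h⟩]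
  exact csSup_singleton v

lemma nat_sInf_eq {T : Set ℕ} {v : ℕ} (h0 : v ∈ T) (h : ∀ n ∈ T, v ≤ n) : sInf T = v :=
  le_antisymm (Nat.sInf_le h0) (le_csInf ⟨v, h0⟩ h)

section Compute
variable {P : Type*} [DecidableEq P] {i : P} (pr : FENPref P i)

lemma deltaPlus_eq {f : P} (hf : pr.friends = {f}) (hfi : f ≠ i) (C : Finset P) :
    pr.deltaPlus C = if f ∈ C then 0 else 1 := by
  have hfm : f ∈ pr.friends := by rw [hf]; exact Finset.mem_singleton_self f
  have hRpff : pr.Rp f f := pr.wo_p.refl f hfm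
  have hF : ∀ x, x ∈ pr.friends ↔ x = f := by intro x; rw [hf]; exact Finset.mem_singleton
  have hmem : ∀ x : P, x ∈ insert i pr.friends ↔ x = i ∨ x = f := by
    intro x; rw [Finset.mem_insert, hF]
  have hiS : i ∈ insert i pr.friends := Finset.mem_insert_self _ _
  have hfS : f ∈ insert i pr.friends := (hmem f).mpr (Or.inr rfl)
  have hpp : ∀ x y, pr.prefPlus x y ↔ ((x = f ∧ y = f) ∨ (x = f ∧ y = i) ∨ (x = i ∧ y = i)) := by
    intro x y
    constructor
    · rintro (⟨hx, hy, _⟩ | ⟨hx, h⟩ | ⟨h1, h2⟩)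
      · exact Or.inl ⟨(hF x).mp hx, (hF y).mp hy⟩
      · exact Or.inr (Or.inl ⟨(hF x).mp hx, h⟩)
      · exact Or.inr (Or.inr ⟨h1, h2⟩)
    · rintro (⟨h1, h2⟩ | ⟨h1, h2⟩ | ⟨h1, h2⟩)
      · exact Or.inl ⟨(hF x).mpr h1, (hF y).mpr h2, h1 ▸ h2 ▸ hRpff⟩
      · exact Or.inr (Or.inl ⟨(hF x).mpr h1, h2⟩)
      · exact Or.inr (Or.inr ⟨h1, h2⟩)
  set A0 : P → P → Prop := fun x y => x = f ∧ y = i with hA0def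
  have hA0 : IsLinExtOn (insert i pr.friends) pr.prefPlus A0 := by
    constructor
    · rintro x _ ⟨h1, h2⟩; exact hfi (h1.symm.trans h2)
    · rintro x _ y _ z _ ⟨_, h2⟩ ⟨h3, _⟩; exact absurd (h3.symm.trans h2) hfi
    · intro x hx y hy hne
      rcases (hmem x).mp hx with h | h <;> rcases (hmem y).mp hy with h' | h'
      · exact absurd (h.trans h'.symm) hne
      · exact Or.inr ⟨h', h⟩
      · exact Or.inl ⟨h, h'⟩
      · exact absurd (h.trans h'.symm) hne
    · intro x hx y hy hs
      rcases hs with ⟨h1, h2⟩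
      rcases (hpp x y).mp h1 with ⟨ha, hb⟩ | ⟨ha, hb⟩ | ⟨ha, hb⟩
      · exact absurd ((hpp y x).mpr (Or.inl ⟨hb, ha⟩)) h2
      · exact ⟨ha, hb⟩
      · exact absurd ((hpp y x).mpr (Or.inr (Or.inr ⟨hb, ha⟩))) h2
  by_cases hC : f ∈ C
  · simp only [if_pos hC]
    have hcp : ∀ x y, pr.coalPlus C x y ↔
        ((x = f ∧ y = f) ∨ (x = f ∧ y = i) ∨ (x = i ∧ y = i)) := by
      intro x y
      constructor
      · intro h
        rcases h with ⟨hx, _, hy, _, _⟩ | ⟨⟨hx, _⟩, hy⟩ | ⟨hxi, hy⟩ | ⟨hx, hxC, _, _, _⟩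
        · exact Or.inl ⟨(hF x).mp hx, (hF y).mp hy⟩
        · rcases hy with h' | ⟨hy, hyC⟩
          · exact Or.inr (Or.inl ⟨(hF x).mp hx, h'⟩)
          · exact absurd hyC (by rw [(hF y).mp hy]; simpa using hC)
        · rcases hy with h' | ⟨hy, hyC⟩
          · exact Or.inr (Or.inr ⟨hxi, h'⟩)
          · exact absurd hyC (by rw [(hF y).mp hy]; simpa using hC)
        · exact absurd hxC (by rw [(hF x).mp hx]; simpa using hC)
      · rintro (⟨h1, h2⟩ | ⟨h1, h2⟩ | ⟨h1, h2⟩)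
        · exact Or.inl ⟨(hF x).mpr h1, h1 ▸ hC, (hF y).mpr h2, h2 ▸ hC, h1 ▸ h2 ▸ hRpff⟩
        · exact Or.inr (Or.inl ⟨⟨(hF x).mpr h1, h1 ▸ hC⟩, Or.inl h2⟩)
        · exact Or.inr (Or.inr (Or.inl ⟨h1, Or.inl h2⟩))
    have hA0' : IsLinExtOn (insert i pr.friends) (pr.coalPlus C) A0 := by
      refine ⟨hA0.irrefl, hA0.trans, hA0.total, ?_⟩
      intro x hx y hy hs
      rcases hs with ⟨h1, h2⟩
      rcases (hcp x y).mp h1 with ⟨ha, hb⟩ | ⟨ha, hb⟩ | ⟨ha, hb⟩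
      · exact absurd ((hcp y x).mpr (Or.inl ⟨hb, ha⟩)) h2
      · exact ⟨ha, hb⟩
      · exact absurd ((hcp y x).mpr (Or.inr (Or.inr ⟨hb, ha⟩))) h2
    have key : ∀ B, IsLinExtOn (insert i pr.friends) (pr.coalPlus C) B →
        sInf { m : ℕ | ∃ A, IsLinExtOn (insert i pr.friends) pr.prefPlus A ∧
          m = kendallTau (insert i pr.friends) A B } = 0 := by
      intro B hB
      have hBfi : B f i := hB.extend f hfS i hiS ⟨(hcp f i).mpr (Or.inr (Or.inl ⟨rfl, rfl⟩)),
        fun h => by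
          rcases (hcp i f).mp h with ⟨h1, _⟩ | ⟨h1, _⟩ | ⟨_, h1⟩ <;>
            first | exact hfi h1 | exact hfi h1.symm⟩
      have hBif : ¬ B i f := fun h => hB.irrefl f hfS (hB.trans f hfS i hiS f hfS hBfi h)
      apply Nat.sInf_eq_zero.mpr
      left
      refine ⟨A0, hA0, ?_⟩
      unfold kendallTau
      have hset : {p : P × P | p.1 ∈ insert i pr.friends ∧ p.2 ∈ insert i pr.friends ∧
          A0 p.1 p.2 ∧ B p.2 p.1} = (∅ : Set (P × P)) := by
        ext ⟨x, y⟩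
        simp only [Set.mem_setOf_eq, Set.mem_empty_iff_false, iff_false, not_and]
        rintro _ _ ⟨h1, h2⟩ hBxy
        exact hBif (h2 ▸ h1 ▸ hBxy)
      rw [hset, Set.ncard_empty]
    apply nat_sSup_eq
    · exact ⟨A0, hA0', (key A0 hA0').symm⟩
    · rintro n ⟨B, hB, rfl⟩; exact key B hB
  · simp only [if_neg hC]
    have hcp : ∀ x y, pr.coalPlus C x y ↔
        ((x = f ∧ y = f) ∨ (x = i ∧ y = i) ∨ (x = i ∧ y = f)) := by
      intro x y
      constructor
      · intro h
        rcases h with ⟨hx, hxC, _⟩ | ⟨⟨hx, hxC⟩, _⟩ | ⟨hxi, hy⟩ | ⟨hx, _, hy, _, _⟩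
        · exact absurd hxC (by rw [(hF x).mp hx]; exact hC)
        · exact absurd hxC (by rw [(hF x).mp hx]; exact hC)
        · rcases hy with h' | ⟨hy, _⟩
          · exact Or.inr (Or.inl ⟨hxi, h'⟩)
          · exact Or.inr (Or.inr ⟨hxi, (hF y).mp hy⟩)
        · exact Or.inl ⟨(hF x).mp hx, (hF y).mp hy⟩
      · rintro (⟨h1, h2⟩ | ⟨h1, h2⟩ | ⟨h1, h2⟩)
        · exact Or.inr (Or.inr (Or.inr
            ⟨(hF x).mpr h1, h1 ▸ hC, (hF y).mpr h2, h2 ▸ hC, h1 ▸ h2 ▸ hRpff⟩))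
        · exact Or.inr (Or.inr (Or.inl ⟨h1, Or.inl h2⟩))
        · exact Or.inr (Or.inr (Or.inl ⟨h1, Or.inr ⟨(hF y).mpr h2, h2 ▸ hC⟩⟩))
    set B0 : P → P → Prop := fun x y => x = i ∧ y = f with hB0def
    have hB0 : IsLinExtOn (insert i pr.friends) (pr.coalPlus C) B0 := by
      constructor
      · rintro x _ ⟨h1, h2⟩; exact hfi (h2.symm.trans h1)
      · rintro x _ y _ z _ ⟨_, h2⟩ ⟨h3, _⟩; exact absurd (h2.symm.trans h3) hfi
      · intro x hx y hy hne
        rcases (hmem x).mp hx with h | h <;> rcases (hmem y).mp hy with h' | h'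
        · exact absurd (h.trans h'.symm) hne
        · exact Or.inl ⟨h, h'⟩
        · exact Or.inr ⟨h', h⟩
        · exact absurd (h.trans h'.symm) hne
      · intro x hx y hy hs
        rcases hs with ⟨h1, h2⟩
        rcases (hcp x y).mp h1 with ⟨ha, hb⟩ | ⟨ha, hb⟩ | ⟨ha, hb⟩
        · exact absurd ((hcp y x).mpr (Or.inl ⟨hb, ha⟩)) h2
        · exact absurd ((hcp y x).mpr (Or.inr (Or.inl ⟨hb, ha⟩))) h2
        · exact ⟨ha, hb⟩
    have key : ∀ B, IsLinExtOn (insert i pr.friends) (pr.coalPlus C) B →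
        sInf { m : ℕ | ∃ A, IsLinExtOn (insert i pr.friends) pr.prefPlus A ∧
          m = kendallTau (insert i pr.friends) A B } = 1 := by
      intro B hB
      have hBif : B i f := hB.extend i hiS f hfS ⟨(hcp i f).mpr (Or.inr (Or.inr ⟨rfl, rfl⟩)),
        fun h => by
          rcases (hcp f i).mp h with ⟨_, h1⟩ | ⟨h1, _⟩ | ⟨h1, _⟩ <;>
            first | exact hfi h1 | exact hfi h1.symm⟩
      have hBfi : ¬ B f i := fun h => hB.irrefl f hfS (hB.trans f hfS i hiS f hfS h hBif)
      have hτ : ∀ A, IsLinExtOn (insert i pr.friends) pr.prefPlus A →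
          kendallTau (insert i pr.friends) A B = 1 := by
        intro A hA
        have hAfi : A f i := hA.extend f hfS i hiS ⟨(hpp f i).mpr (Or.inr (Or.inl ⟨rfl, rfl⟩)),
          fun h => by
            rcases (hpp i f).mp h with ⟨h1, _⟩ | ⟨h1, _⟩ | ⟨_, h1⟩ <;>
              first | exact hfi h1 | exact hfi h1.symm⟩
        have hAif : ¬ A i f := fun h => hA.irrefl i hiS (hA.trans i hiS f hfS i hiS h hAfi)
        unfold kendallTau
        have hset : {p : P × P | p.1 ∈ insert i pr.friends ∧ p.2 ∈ insert i pr.friends ∧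
            A p.1 p.2 ∧ B p.2 p.1} = {(f, i)} := by
          ext ⟨x, y⟩
          simp only [Set.mem_setOf_eq, Set.mem_singleton_iff, Prod.mk.injEq]
          constructor
          · rintro ⟨hx, hy, hAxy, hByx⟩
            rcases (hmem x).mp hx with h | h <;> rcases (hmem y).mp hy with h' | h'
            · exact absurd hAxy (h'.symm ▸ h.symm ▸ hA.irrefl i hiS)
            · exact absurd hAxy (h'.symm ▸ h.symm ▸ hAif)
            · exact ⟨h, h'⟩
            · exact absurd hAxy (h'.symm ▸ h.symm ▸ hA.irrefl f hfS)
          · rintro ⟨h1, h2⟩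
            exact ⟨h1 ▸ hfS, h2 ▸ hiS, h1 ▸ h2 ▸ hAfi, h1 ▸ h2 ▸ hBif⟩
        rw [hset, Set.ncard_singleton]
      apply nat_sInf_eq
      · exact ⟨A0, hA0, (hτ A0 hA0).symm⟩
      · rintro n ⟨A, hA, rfl⟩; rw [hτ A hA]
    apply nat_sSup_eq
    · exact ⟨B0, hB0, (key B0 hB0).symm⟩
    · rintro n ⟨B, hB, rfl⟩; exact key B hB

end Compute
section ComputeMinus
variable {P : Type*} [DecidableEq P] {i : P} (pr : FENPref P i)

lemma linext_asymm {S : Finset P} {R B : P → P → Prop} (hB : IsLinExtOn S R B) {x y : P}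
    (hx : x ∈ S) (hy : y ∈ S) (h : B x y) : ¬ B y x :=
  fun h' => hB.irrefl x hx (hB.trans x hx y hy x hx h h')

lemma linext_three {a b c : P} {S : Finset P} (hS : ∀ x, x ∈ S ↔ x = a ∨ x = b ∨ x = c)
    (hab : a ≠ b) (hac : a ≠ c) (hbc : b ≠ c) {R : P → P → Prop}
    (hR : ∀ x y, strictOf R x y → x ∈ S → y ∈ S →
      ((x = a ∧ y = b) ∨ (x = a ∧ y = c) ∨ (x = b ∧ y = c))) :
    IsLinExtOn S R (fun x y => (x = a ∧ (y = b ∨ y = c)) ∨ (x = b ∧ y = c)) := by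
  constructor
  · rintro x _ (⟨h1, h2 | h2⟩ | ⟨h1, h2⟩)
    · exact hab (h1.symm.trans h2)
    · exact hac (h1.symm.trans h2)
    · exact hbc (h1.symm.trans h2)
  · rintro x _ y _ z _ (⟨hxa, hy⟩ | ⟨hxb, hyc⟩) (⟨hya, hz⟩ | ⟨hyb, hzc⟩)
    · rcases hy with h | h
      · exact absurd (hya.symm.trans h) hab
      · exact absurd (hya.symm.trans h) hac
    · exact Or.inl ⟨hxa, Or.inr hzc⟩
    · exact absurd (hya.symm.trans hyc) hac
    · exact absurd (hyb.symm.trans hyc) hbc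
  · intro x hx y hy hne
    rcases (hS x).mp hx with h | h | h <;> rcases (hS y).mp hy with h' | h' | h'
    · exact absurd (h.trans h'.symm) hne
    · exact Or.inl (Or.inl ⟨h, Or.inl h'⟩)
    · exact Or.inl (Or.inl ⟨h, Or.inr h'⟩)
    · exact Or.inr (Or.inl ⟨h', Or.inl h⟩)
    · exact absurd (h.trans h'.symm) hne
    · exact Or.inl (Or.inr ⟨h, h'⟩)
    · exact Or.inr (Or.inl ⟨h', Or.inr h⟩)
    · exact Or.inr (Or.inr ⟨h', h⟩)
    · exact absurd (h.trans h'.symm) hne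
  · intro x hx y hy hs
    rcases hR x y hs hx hy with ⟨h1, h2⟩ | ⟨h1, h2⟩ | ⟨h1, h2⟩
    · exact Or.inl ⟨h1, Or.inl h2⟩
    · exact Or.inl ⟨h1, Or.inr h2⟩
    · exact Or.inr ⟨h1, h2⟩

lemma tau_set_finite (S : Finset P) (A B : P → P → Prop) :
    {p : P × P | p.1 ∈ S ∧ p.2 ∈ S ∧ A p.1 p.2 ∧ B p.2 p.1}.Finite := by
  apply Set.Finite.subset (S ×ˢ S).finite_toSet
  rintro ⟨x, y⟩ ⟨h1, h2, _⟩
  simp only [Finset.coe_product, Set.mem_prod]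
  exact ⟨h1, h2⟩

end ComputeMinus

section ComputeMinus2
set_option linter.unusedSectionVars false
variable {P : Type*} [DecidableEq P] {i : P} (pr : FENPref P i)

lemma deltaMinus_none {e1 e2 : P} (he : pr.enemies = {e1, e2}) (h12 : e1 ≠ e2)
    (h1i : e1 ≠ i) (h2i : e2 ≠ i)
    (hRm : ∀ x ∈ pr.enemies, ∀ y ∈ pr.enemies, pr.Rm x y) {C : Finset P}
    (h1C : e1 ∉ C) (h2C : e2 ∉ C) : pr.deltaMinus C = 0 := by
  have hE : ∀ x, x ∈ pr.enemies ↔ x = e1 ∨ x = e2 := by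
    intro x; rw [he, Finset.mem_insert, Finset.mem_singleton]
  have hmem : ∀ x : P, x ∈ insert i pr.enemies ↔ x = i ∨ x = e1 ∨ x = e2 := by
    intro x; rw [Finset.mem_insert, hE]
  have hiS : i ∈ insert i pr.enemies := Finset.mem_insert_self _ _
  have h1S : e1 ∈ insert i pr.enemies := (hmem e1).mpr (Or.inr (Or.inl rfl))
  have h2S : e2 ∈ insert i pr.enemies := (hmem e2).mpr (Or.inr (Or.inr rfl))
  have hRm' : ∀ x y, (x = e1 ∨ x = e2) → (y = e1 ∨ y = e2) → pr.Rm x y :=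
    fun x y hx hy => hRm x ((hE x).mpr hx) y ((hE y).mpr hy)
  have hpm : ∀ x y, pr.prefMinus x y ↔
      ((x = i ∧ y = i) ∨ (x = i ∧ (y = e1 ∨ y = e2)) ∨
        ((x = e1 ∨ x = e2) ∧ (y = e1 ∨ y = e2))) := by
    intro x y
    constructor
    · rintro (⟨h1, h2⟩ | ⟨h1, hy⟩ | ⟨hx, hy, _⟩)
      · exact Or.inl ⟨h1, h2⟩
      · exact Or.inr (Or.inl ⟨h1, (hE y).mp hy⟩)
      · exact Or.inr (Or.inr ⟨(hE x).mp hx, (hE y).mp hy⟩)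
    · rintro (⟨h1, h2⟩ | ⟨h1, hy⟩ | ⟨hx, hy⟩)
      · exact Or.inl ⟨h1, h2⟩
      · exact Or.inr (Or.inl ⟨h1, (hE y).mpr hy⟩)
      · exact Or.inr (Or.inr ⟨(hE x).mpr hx, (hE y).mpr hy, hRm' x y hx hy⟩)
  have hpmS : ∀ x y, strictOf pr.prefMinus x y →
      ((x = i ∧ y = e1) ∨ (x = i ∧ y = e2)) := by
    rintro x y ⟨h1, h2⟩
    rcases (hpm x y).mp h1 with ⟨ha, hb⟩ | ⟨ha, hb⟩ | ⟨ha, hb⟩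
    · exact absurd ((hpm y x).mpr (Or.inl ⟨hb, ha⟩)) h2
    · rcases hb with hb | hb
      · exact Or.inl ⟨ha, hb⟩
      · exact Or.inr ⟨ha, hb⟩
    · exact absurd ((hpm y x).mpr (Or.inr (Or.inr ⟨hb, ha⟩))) h2
  have hA1 : IsLinExtOn (insert i pr.enemies) pr.prefMinus
      (fun x y => (x = i ∧ (y = e1 ∨ y = e2)) ∨ (x = e1 ∧ y = e2)) := by
    refine linext_three hmem (Ne.symm h1i) (Ne.symm h2i) h12 ?_
    intro x y hs _ _
    rcases hpmS x y hs with ⟨ha, hb⟩ | ⟨ha, hb⟩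
    · exact Or.inl ⟨ha, hb⟩
    · exact Or.inr (Or.inl ⟨ha, hb⟩)
  have hA2 : IsLinExtOn (insert i pr.enemies) pr.prefMinus
      (fun x y => (x = i ∧ (y = e2 ∨ y = e1)) ∨ (x = e2 ∧ y = e1)) := by
    refine linext_three (fun x => (hmem x).trans (by tauto)) (Ne.symm h2i) (Ne.symm h1i)
      (Ne.symm h12) ?_
    intro x y hs _ _
    rcases hpmS x y hs with ⟨ha, hb⟩ | ⟨ha, hb⟩
    · exact Or.inr (Or.inl ⟨ha, hb⟩)
    · exact Or.inl ⟨ha, hb⟩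
  have hAfor : ∀ A, IsLinExtOn (insert i pr.enemies) pr.prefMinus A → A i e1 ∧ A i e2 := by
    intro A hA
    constructor
    · refine hA.extend i hiS e1 h1S ⟨(hpm i e1).mpr (Or.inr (Or.inl ⟨rfl, Or.inl rfl⟩)), ?_⟩
      intro h
      rcases (hpm e1 i).mp h with ⟨ha, _⟩ | ⟨ha, _⟩ | ⟨_, hb⟩
      · exact h1i ha
      · exact h1i ha
      · rcases hb with h' | h'
        · exact h1i h'.symm
        · exact h2i h'.symm
    · refine hA.extend i hiS e2 h2S ⟨(hpm i e2).mpr (Or.inr (Or.inl ⟨rfl, Or.inr rfl⟩)), ?_⟩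
      intro h
      rcases (hpm e2 i).mp h with ⟨ha, _⟩ | ⟨ha, _⟩ | ⟨_, hb⟩
      · exact h2i ha
      · exact h2i ha
      · rcases hb with h' | h'
        · exact h1i h'.symm
        · exact h2i h'.symm
  have hcm : ∀ x y, pr.coalMinus C x y ↔
      ((x = i ∧ y = i) ∨ (x = i ∧ (y = e1 ∨ y = e2)) ∨
        ((x = e1 ∨ x = e2) ∧ (y = e1 ∨ y = e2))) := by
    intro x y
    constructor
    · rintro (⟨hx, hxC, _⟩ | ⟨⟨hx, hxC⟩, _⟩ | ⟨h1, hy⟩ | ⟨hx, _, hy, _, _⟩)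
      · exact absurd hxC (by rcases (hE x).mp hx with h | h <;> rw [h] <;> assumption)
      · exact absurd hxC (by rcases (hE x).mp hx with h | h <;> rw [h] <;> assumption)
      · rcases hy with h | ⟨hy, _⟩
        · exact Or.inl ⟨h1, h⟩
        · exact Or.inr (Or.inl ⟨h1, (hE y).mp hy⟩)
      · exact Or.inr (Or.inr ⟨(hE x).mp hx, (hE y).mp hy⟩)
    · rintro (⟨h1, h2⟩ | ⟨h1, hy⟩ | ⟨hx, hy⟩)
      · exact Or.inr (Or.inr (Or.inl ⟨h1, Or.inl h2⟩))
      · exact Or.inr (Or.inr (Or.inl ⟨h1, Or.inr ⟨(hE y).mpr hy,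
          by rcases hy with h | h <;> rw [h] <;> assumption⟩⟩))
      · exact Or.inr (Or.inr (Or.inr ⟨(hE x).mpr hx,
          (by rcases hx with h | h <;> rw [h] <;> assumption), (hE y).mpr hy,
          (by rcases hy with h | h <;> rw [h] <;> assumption), hRm' x y hx hy⟩))
  have hcmS : ∀ x y, strictOf (pr.coalMinus C) x y →
      ((x = i ∧ y = e1) ∨ (x = i ∧ y = e2)) := by
    rintro x y ⟨h1, h2⟩
    rcases (hcm x y).mp h1 with ⟨ha, hb⟩ | ⟨ha, hb⟩ | ⟨ha, hb⟩
    · exact absurd ((hcm y x).mpr (Or.inl ⟨hb, ha⟩)) h2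
    · rcases hb with hb | hb
      · exact Or.inl ⟨ha, hb⟩
      · exact Or.inr ⟨ha, hb⟩
    · exact absurd ((hcm y x).mpr (Or.inr (Or.inr ⟨hb, ha⟩))) h2
  have hB1 : IsLinExtOn (insert i pr.enemies) (pr.coalMinus C)
      (fun x y => (x = i ∧ (y = e1 ∨ y = e2)) ∨ (x = e1 ∧ y = e2)) := by
    refine linext_three hmem (Ne.symm h1i) (Ne.symm h2i) h12 ?_
    intro x y hs _ _
    rcases hcmS x y hs with ⟨ha, hb⟩ | ⟨ha, hb⟩
    · exact Or.inl ⟨ha, hb⟩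
    · exact Or.inr (Or.inl ⟨ha, hb⟩)
  have key : ∀ B, IsLinExtOn (insert i pr.enemies) (pr.coalMinus C) B →
      sInf { m : ℕ | ∃ A, IsLinExtOn (insert i pr.enemies) pr.prefMinus A ∧
        m = kendallTau (insert i pr.enemies) A B } = 0 := by
    intro B hB
    have hBie1 : B i e1 := by
      refine hB.extend i hiS e1 h1S ⟨(hcm i e1).mpr (Or.inr (Or.inl ⟨rfl, Or.inl rfl⟩)), ?_⟩
      intro h
      rcases (hcm e1 i).mp h with ⟨ha, _⟩ | ⟨ha, _⟩ | ⟨_, hb⟩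
      · exact h1i ha
      · exact h1i ha
      · rcases hb with h' | h'
        · exact h1i h'.symm
        · exact h2i h'.symm
    have hBie2 : B i e2 := by
      refine hB.extend i hiS e2 h2S ⟨(hcm i e2).mpr (Or.inr (Or.inl ⟨rfl, Or.inr rfl⟩)), ?_⟩
      intro h
      rcases (hcm e2 i).mp h with ⟨ha, _⟩ | ⟨ha, _⟩ | ⟨_, hb⟩
      · exact h2i ha
      · exact h2i ha
      · rcases hb with h' | h'
        · exact h1i h'.symm
        · exact h2i h'.symm
    apply Nat.sInf_eq_zero.mpr
    left
    by_cases hBe : B e1 e2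
    · refine ⟨_, hA1, ?_⟩
      have hset : {p : P × P | p.1 ∈ insert i pr.enemies ∧ p.2 ∈ insert i pr.enemies ∧
          ((p.1 = i ∧ (p.2 = e1 ∨ p.2 = e2)) ∨ (p.1 = e1 ∧ p.2 = e2)) ∧ B p.2 p.1} =
          (∅ : Set (P × P)) := by
        ext ⟨x, y⟩
        simp only [Set.mem_setOf_eq, Set.mem_empty_iff_false, iff_false]
        rintro ⟨hx, hy, hA, hB'⟩
        rcases hA with ⟨h1, h2 | h2⟩ | ⟨h1, h2⟩
        · exact linext_asymm hB hiS h1S hBie1 (h1 ▸ h2 ▸ hB')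
        · exact linext_asymm hB hiS h2S hBie2 (h1 ▸ h2 ▸ hB')
        · exact linext_asymm hB h1S h2S hBe (h1 ▸ h2 ▸ hB')
      show 0 = kendallTau _ _ _
      unfold kendallTau
      rw [hset, Set.ncard_empty]
    · have hBe' : B e2 e1 := (hB.total e1 h1S e2 h2S h12).resolve_left hBe
      refine ⟨_, hA2, ?_⟩
      have hset : {p : P × P | p.1 ∈ insert i pr.enemies ∧ p.2 ∈ insert i pr.enemies ∧
          ((p.1 = i ∧ (p.2 = e2 ∨ p.2 = e1)) ∨ (p.1 = e2 ∧ p.2 = e1)) ∧ B p.2 p.1} =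
          (∅ : Set (P × P)) := by
        ext ⟨x, y⟩
        simp only [Set.mem_setOf_eq, Set.mem_empty_iff_false, iff_false]
        rintro ⟨hx, hy, hA, hB'⟩
        rcases hA with ⟨h1, h2 | h2⟩ | ⟨h1, h2⟩
        · exact linext_asymm hB hiS h2S hBie2 (h1 ▸ h2 ▸ hB')
        · exact linext_asymm hB hiS h1S hBie1 (h1 ▸ h2 ▸ hB')
        · exact hBe (h1 ▸ h2 ▸ hB')
      show 0 = kendallTau _ _ _
      unfold kendallTau
      rw [hset, Set.ncard_empty]
  apply nat_sSup_eq
  · exact ⟨_, hB1, (key _ hB1).symm⟩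
  · rintro n ⟨B, hB, rfl⟩
    exact key B hB

lemma deltaMinus_both {e1 e2 : P} (he : pr.enemies = {e1, e2}) (h12 : e1 ≠ e2)
    (h1i : e1 ≠ i) (h2i : e2 ≠ i)
    (hRm : ∀ x ∈ pr.enemies, ∀ y ∈ pr.enemies, pr.Rm x y) {C : Finset P}
    (h1C : e1 ∈ C) (h2C : e2 ∈ C) : pr.deltaMinus C = 2 := by
  have hE : ∀ x, x ∈ pr.enemies ↔ x = e1 ∨ x = e2 := by
    intro x; rw [he, Finset.mem_insert, Finset.mem_singleton]
  have hmem : ∀ x : P, x ∈ insert i pr.enemies ↔ x = i ∨ x = e1 ∨ x = e2 := by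
    intro x; rw [Finset.mem_insert, hE]
  have hiS : i ∈ insert i pr.enemies := Finset.mem_insert_self _ _
  have h1S : e1 ∈ insert i pr.enemies := (hmem e1).mpr (Or.inr (Or.inl rfl))
  have h2S : e2 ∈ insert i pr.enemies := (hmem e2).mpr (Or.inr (Or.inr rfl))
  have hRm' : ∀ x y, (x = e1 ∨ x = e2) → (y = e1 ∨ y = e2) → pr.Rm x y :=
    fun x y hx hy => hRm x ((hE x).mpr hx) y ((hE y).mpr hy)
  have hpm : ∀ x y, pr.prefMinus x y ↔
      ((x = i ∧ y = i) ∨ (x = i ∧ (y = e1 ∨ y = e2)) ∨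
        ((x = e1 ∨ x = e2) ∧ (y = e1 ∨ y = e2))) := by
    intro x y
    constructor
    · rintro (⟨h1, h2⟩ | ⟨h1, hy⟩ | ⟨hx, hy, _⟩)
      · exact Or.inl ⟨h1, h2⟩
      · exact Or.inr (Or.inl ⟨h1, (hE y).mp hy⟩)
      · exact Or.inr (Or.inr ⟨(hE x).mp hx, (hE y).mp hy⟩)
    · rintro (⟨h1, h2⟩ | ⟨h1, hy⟩ | ⟨hx, hy⟩)
      · exact Or.inl ⟨h1, h2⟩
      · exact Or.inr (Or.inl ⟨h1, (hE y).mpr hy⟩)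
      · exact Or.inr (Or.inr ⟨(hE x).mpr hx, (hE y).mpr hy, hRm' x y hx hy⟩)
  have hpmS : ∀ x y, strictOf pr.prefMinus x y →
      ((x = i ∧ y = e1) ∨ (x = i ∧ y = e2)) := by
    rintro x y ⟨h1, h2⟩
    rcases (hpm x y).mp h1 with ⟨ha, hb⟩ | ⟨ha, hb⟩ | ⟨ha, hb⟩
    · exact absurd ((hpm y x).mpr (Or.inl ⟨hb, ha⟩)) h2
    · rcases hb with hb | hb
      · exact Or.inl ⟨ha, hb⟩
      · exact Or.inr ⟨ha, hb⟩
    · exact absurd ((hpm y x).mpr (Or.inr (Or.inr ⟨hb, ha⟩))) h2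
  have hA1 : IsLinExtOn (insert i pr.enemies) pr.prefMinus
      (fun x y => (x = i ∧ (y = e1 ∨ y = e2)) ∨ (x = e1 ∧ y = e2)) := by
    refine linext_three hmem (Ne.symm h1i) (Ne.symm h2i) h12 ?_
    intro x y hs _ _
    rcases hpmS x y hs with ⟨ha, hb⟩ | ⟨ha, hb⟩
    · exact Or.inl ⟨ha, hb⟩
    · exact Or.inr (Or.inl ⟨ha, hb⟩)
  have hA2 : IsLinExtOn (insert i pr.enemies) pr.prefMinus
      (fun x y => (x = i ∧ (y = e2 ∨ y = e1)) ∨ (x = e2 ∧ y = e1)) := by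
    refine linext_three (fun x => (hmem x).trans (by tauto)) (Ne.symm h2i) (Ne.symm h1i)
      (Ne.symm h12) ?_
    intro x y hs _ _
    rcases hpmS x y hs with ⟨ha, hb⟩ | ⟨ha, hb⟩
    · exact Or.inr (Or.inl ⟨ha, hb⟩)
    · exact Or.inl ⟨ha, hb⟩
  have hAfor : ∀ A, IsLinExtOn (insert i pr.enemies) pr.prefMinus A → A i e1 ∧ A i e2 := by
    intro A hA
    constructor
    · refine hA.extend i hiS e1 h1S ⟨(hpm i e1).mpr (Or.inr (Or.inl ⟨rfl, Or.inl rfl⟩)), ?_⟩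
      intro h
      rcases (hpm e1 i).mp h with ⟨ha, _⟩ | ⟨ha, _⟩ | ⟨_, hb⟩
      · exact h1i ha
      · exact h1i ha
      · rcases hb with h' | h'
        · exact h1i h'.symm
        · exact h2i h'.symm
    · refine hA.extend i hiS e2 h2S ⟨(hpm i e2).mpr (Or.inr (Or.inl ⟨rfl, Or.inr rfl⟩)), ?_⟩
      intro h
      rcases (hpm e2 i).mp h with ⟨ha, _⟩ | ⟨ha, _⟩ | ⟨_, hb⟩
      · exact h2i ha
      · exact h2i ha
      · rcases hb with h' | h'
        · exact h1i h'.symm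
        · exact h2i h'.symm
  have hcm : ∀ x y, pr.coalMinus C x y ↔
      (((x = e1 ∨ x = e2) ∧ (y = e1 ∨ y = e2)) ∨ ((x = e1 ∨ x = e2) ∧ y = i) ∨
        (x = i ∧ y = i)) := by
    intro x y
    constructor
    · rintro (⟨hx, _, hy, _, _⟩ | ⟨⟨hx, _⟩, hy⟩ | ⟨h1, hy⟩ | ⟨hx, hxC, _, _, _⟩)
      · exact Or.inl ⟨(hE x).mp hx, (hE y).mp hy⟩
      · rcases hy with h | ⟨hy, hyC⟩
        · exact Or.inr (Or.inl ⟨(hE x).mp hx, h⟩)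
        · exact absurd hyC (by rcases (hE y).mp hy with h | h <;> rw [h] <;> simpa)
      · rcases hy with h | ⟨hy, hyC⟩
        · exact Or.inr (Or.inr ⟨h1, h⟩)
        · exact absurd hyC (by rcases (hE y).mp hy with h | h <;> rw [h] <;> simpa)
      · exact absurd hxC (by rcases (hE x).mp hx with h | h <;> rw [h] <;> simpa)
    · rintro (⟨hx, hy⟩ | ⟨hx, h⟩ | ⟨h1, h2⟩)
      · exact Or.inl ⟨(hE x).mpr hx, (by rcases hx with h | h <;> rw [h] <;> assumption),
          (hE y).mpr hy, (by rcases hy with h | h <;> rw [h] <;> assumption), hRm' y x hy hx⟩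
      · exact Or.inr (Or.inl ⟨⟨(hE x).mpr hx,
          (by rcases hx with h' | h' <;> rw [h'] <;> assumption)⟩, Or.inl h⟩)
      · exact Or.inr (Or.inr (Or.inl ⟨h1, Or.inl h2⟩))
  have hcmS : ∀ x y, strictOf (pr.coalMinus C) x y →
      ((x = e1 ∧ y = i) ∨ (x = e2 ∧ y = i)) := by
    rintro x y ⟨h1, h2⟩
    rcases (hcm x y).mp h1 with ⟨ha, hb⟩ | ⟨ha, hb⟩ | ⟨ha, hb⟩
    · exact absurd ((hcm y x).mpr (Or.inl ⟨hb, ha⟩)) h2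
    · rcases ha with ha | ha
      · exact Or.inl ⟨ha, hb⟩
      · exact Or.inr ⟨ha, hb⟩
    · exact absurd ((hcm y x).mpr (Or.inr (Or.inr ⟨hb, ha⟩))) h2
  have hB0 : IsLinExtOn (insert i pr.enemies) (pr.coalMinus C)
      (fun x y => (x = e1 ∧ (y = e2 ∨ y = i)) ∨ (x = e2 ∧ y = i)) := by
    refine linext_three (fun x => (hmem x).trans (by tauto)) h12 h1i h2i ?_
    intro x y hs _ _
    rcases hcmS x y hs with ⟨ha, hb⟩ | ⟨ha, hb⟩
    · exact Or.inr (Or.inl ⟨ha, hb⟩)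
    · exact Or.inr (Or.inr ⟨ha, hb⟩)
  have hpairne : ((i, e1) : P × P) ≠ (i, e2) := fun h => h12 (congrArg Prod.snd h)
  have key : ∀ B, IsLinExtOn (insert i pr.enemies) (pr.coalMinus C) B →
      sInf { m : ℕ | ∃ A, IsLinExtOn (insert i pr.enemies) pr.prefMinus A ∧
        m = kendallTau (insert i pr.enemies) A B } = 2 := by
    intro B hB
    have hB1i : B e1 i := by
      refine hB.extend e1 h1S i hiS ⟨(hcm e1 i).mpr (Or.inr (Or.inl ⟨Or.inl rfl, rfl⟩)), ?_⟩
      intro h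
      rcases (hcm i e1).mp h with ⟨ha, _⟩ | ⟨ha, _⟩ | ⟨_, hb⟩
      · rcases ha with h' | h'
        · exact h1i h'.symm
        · exact h2i h'.symm
      · rcases ha with h' | h'
        · exact h1i h'.symm
        · exact h2i h'.symm
      · exact h1i hb
    have hB2i : B e2 i := by
      refine hB.extend e2 h2S i hiS ⟨(hcm e2 i).mpr (Or.inr (Or.inl ⟨Or.inr rfl, rfl⟩)), ?_⟩
      intro h
      rcases (hcm i e2).mp h with ⟨ha, _⟩ | ⟨ha, _⟩ | ⟨_, hb⟩
      · rcases ha with h' | h'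
        · exact h1i h'.symm
        · exact h2i h'.symm
      · rcases ha with h' | h'
        · exact h1i h'.symm
        · exact h2i h'.symm
      · exact h2i hb
    apply nat_sInf_eq
    · by_cases hBe : B e1 e2
      · refine ⟨_, hA1, ?_⟩
        have hset : {p : P × P | p.1 ∈ insert i pr.enemies ∧ p.2 ∈ insert i pr.enemies ∧
            ((p.1 = i ∧ (p.2 = e1 ∨ p.2 = e2)) ∨ (p.1 = e1 ∧ p.2 = e2)) ∧ B p.2 p.1} =
            {((i : P), e1), ((i : P), e2)} := by
          ext ⟨x, y⟩
          simp only [Set.mem_setOf_eq, Set.mem_insert_iff, Set.mem_singleton_iff,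
            Prod.mk.injEq]
          constructor
          · rintro ⟨hx, hy, hA, hB'⟩
            rcases hA with ⟨h1, h2 | h2⟩ | ⟨h1, h2⟩
            · exact Or.inl ⟨h1, h2⟩
            · exact Or.inr ⟨h1, h2⟩
            · exact absurd (h1 ▸ h2 ▸ hB') (linext_asymm hB h1S h2S hBe)
          · rintro (⟨h1, h2⟩ | ⟨h1, h2⟩)
            · exact ⟨(hmem x).mpr (Or.inl h1), (hmem y).mpr (Or.inr (Or.inl h2)),
                Or.inl ⟨h1, Or.inl h2⟩, by rw [h1, h2]; exact hB1i⟩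
            · exact ⟨(hmem x).mpr (Or.inl h1), (hmem y).mpr (Or.inr (Or.inr h2)),
                Or.inl ⟨h1, Or.inr h2⟩, by rw [h1, h2]; exact hB2i⟩
        show 2 = kendallTau _ _ _
        unfold kendallTau
        rw [hset, Set.ncard_pair hpairne]
      · have hBe' : B e2 e1 := (hB.total e1 h1S e2 h2S h12).resolve_left hBe
        refine ⟨_, hA2, ?_⟩
        have hset : {p : P × P | p.1 ∈ insert i pr.enemies ∧ p.2 ∈ insert i pr.enemies ∧
            ((p.1 = i ∧ (p.2 = e2 ∨ p.2 = e1)) ∨ (p.1 = e2 ∧ p.2 = e1)) ∧ B p.2 p.1} =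
            {((i : P), e1), ((i : P), e2)} := by
          ext ⟨x, y⟩
          simp only [Set.mem_setOf_eq, Set.mem_insert_iff, Set.mem_singleton_iff,
            Prod.mk.injEq]
          constructor
          · rintro ⟨hx, hy, hA, hB'⟩
            rcases hA with ⟨h1, h2 | h2⟩ | ⟨h1, h2⟩
            · exact Or.inr ⟨h1, h2⟩
            · exact Or.inl ⟨h1, h2⟩
            · exact absurd (h1 ▸ h2 ▸ hB') hBe
          · rintro (⟨h1, h2⟩ | ⟨h1, h2⟩)
            · exact ⟨(hmem x).mpr (Or.inl h1), (hmem y).mpr (Or.inr (Or.inl h2)),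
                Or.inl ⟨h1, Or.inr h2⟩, by rw [h1, h2]; exact hB1i⟩
            · exact ⟨(hmem x).mpr (Or.inl h1), (hmem y).mpr (Or.inr (Or.inr h2)),
                Or.inl ⟨h1, Or.inl h2⟩, by rw [h1, h2]; exact hB2i⟩
        show 2 = kendallTau _ _ _
        unfold kendallTau
        rw [hset, Set.ncard_pair hpairne]
    · rintro n ⟨A, hA, rfl⟩
      obtain ⟨hAie1, hAie2⟩ := hAfor A hA
      have hsub : ({((i : P), e1), ((i : P), e2)} : Set (P × P)) ⊆
          {p : P × P | p.1 ∈ insert i pr.enemies ∧ p.2 ∈ insert i pr.enemies ∧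
            A p.1 p.2 ∧ B p.2 p.1} := by
        rintro ⟨x, y⟩ h
        simp only [Set.mem_insert_iff, Set.mem_singleton_iff, Prod.mk.injEq] at h
        rcases h with ⟨h1, h2⟩ | ⟨h1, h2⟩
        · exact ⟨(hmem x).mpr (Or.inl h1), (hmem y).mpr (Or.inr (Or.inl h2)),
            (by rw [h1, h2]; exact hAie1), (by rw [h1, h2]; exact hB1i)⟩
        · exact ⟨(hmem x).mpr (Or.inl h1), (hmem y).mpr (Or.inr (Or.inr h2)),
            (by rw [h1, h2]; exact hAie2), (by rw [h1, h2]; exact hB2i)⟩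
      have := Set.ncard_le_ncard hsub (tau_set_finite (insert i pr.enemies) A B)
      rw [Set.ncard_pair hpairne] at this
      exact this
  apply nat_sSup_eq
  · exact ⟨_, hB0, (key _ hB0).symm⟩
  · rintro n ⟨B, hB, rfl⟩
    exact key B hB

lemma deltaMinus_one {e1 e2 : P} (he : pr.enemies = {e1, e2}) (h12 : e1 ≠ e2)
    (h1i : e1 ≠ i) (h2i : e2 ≠ i)
    (hRm : ∀ x ∈ pr.enemies, ∀ y ∈ pr.enemies, pr.Rm x y) {C : Finset P}
    (h1C : e1 ∈ C) (h2C : e2 ∉ C) : pr.deltaMinus C = 1 := by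
  have hE : ∀ x, x ∈ pr.enemies ↔ x = e1 ∨ x = e2 := by
    intro x; rw [he, Finset.mem_insert, Finset.mem_singleton]
  have hmem : ∀ x : P, x ∈ insert i pr.enemies ↔ x = i ∨ x = e1 ∨ x = e2 := by
    intro x; rw [Finset.mem_insert, hE]
  have hiS : i ∈ insert i pr.enemies := Finset.mem_insert_self _ _
  have h1S : e1 ∈ insert i pr.enemies := (hmem e1).mpr (Or.inr (Or.inl rfl))
  have h2S : e2 ∈ insert i pr.enemies := (hmem e2).mpr (Or.inr (Or.inr rfl))
  have hRm' : ∀ x y, (x = e1 ∨ x = e2) → (y = e1 ∨ y = e2) → pr.Rm x y :=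
    fun x y hx hy => hRm x ((hE x).mpr hx) y ((hE y).mpr hy)
  have hpm : ∀ x y, pr.prefMinus x y ↔
      ((x = i ∧ y = i) ∨ (x = i ∧ (y = e1 ∨ y = e2)) ∨
        ((x = e1 ∨ x = e2) ∧ (y = e1 ∨ y = e2))) := by
    intro x y
    constructor
    · rintro (⟨h1, h2⟩ | ⟨h1, hy⟩ | ⟨hx, hy, _⟩)
      · exact Or.inl ⟨h1, h2⟩
      · exact Or.inr (Or.inl ⟨h1, (hE y).mp hy⟩)
      · exact Or.inr (Or.inr ⟨(hE x).mp hx, (hE y).mp hy⟩)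
    · rintro (⟨h1, h2⟩ | ⟨h1, hy⟩ | ⟨hx, hy⟩)
      · exact Or.inl ⟨h1, h2⟩
      · exact Or.inr (Or.inl ⟨h1, (hE y).mpr hy⟩)
      · exact Or.inr (Or.inr ⟨(hE x).mpr hx, (hE y).mpr hy, hRm' x y hx hy⟩)
  have hpmS : ∀ x y, strictOf pr.prefMinus x y →
      ((x = i ∧ y = e1) ∨ (x = i ∧ y = e2)) := by
    rintro x y ⟨h1, h2⟩
    rcases (hpm x y).mp h1 with ⟨ha, hb⟩ | ⟨ha, hb⟩ | ⟨ha, hb⟩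
    · exact absurd ((hpm y x).mpr (Or.inl ⟨hb, ha⟩)) h2
    · rcases hb with hb | hb
      · exact Or.inl ⟨ha, hb⟩
      · exact Or.inr ⟨ha, hb⟩
    · exact absurd ((hpm y x).mpr (Or.inr (Or.inr ⟨hb, ha⟩))) h2
  have hA1 : IsLinExtOn (insert i pr.enemies) pr.prefMinus
      (fun x y => (x = i ∧ (y = e1 ∨ y = e2)) ∨ (x = e1 ∧ y = e2)) := by
    refine linext_three hmem (Ne.symm h1i) (Ne.symm h2i) h12 ?_
    intro x y hs _ _
    rcases hpmS x y hs with ⟨ha, hb⟩ | ⟨ha, hb⟩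
    · exact Or.inl ⟨ha, hb⟩
    · exact Or.inr (Or.inl ⟨ha, hb⟩)
  have hA2 : IsLinExtOn (insert i pr.enemies) pr.prefMinus
      (fun x y => (x = i ∧ (y = e2 ∨ y = e1)) ∨ (x = e2 ∧ y = e1)) := by
    refine linext_three (fun x => (hmem x).trans (by tauto)) (Ne.symm h2i) (Ne.symm h1i)
      (Ne.symm h12) ?_
    intro x y hs _ _
    rcases hpmS x y hs with ⟨ha, hb⟩ | ⟨ha, hb⟩
    · exact Or.inr (Or.inl ⟨ha, hb⟩)
    · exact Or.inl ⟨ha, hb⟩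
  have hAfor : ∀ A, IsLinExtOn (insert i pr.enemies) pr.prefMinus A → A i e1 ∧ A i e2 := by
    intro A hA
    constructor
    · refine hA.extend i hiS e1 h1S ⟨(hpm i e1).mpr (Or.inr (Or.inl ⟨rfl, Or.inl rfl⟩)), ?_⟩
      intro h
      rcases (hpm e1 i).mp h with ⟨ha, _⟩ | ⟨ha, _⟩ | ⟨_, hb⟩
      · exact h1i ha
      · exact h1i ha
      · rcases hb with h' | h'
        · exact h1i h'.symm
        · exact h2i h'.symm
    · refine hA.extend i hiS e2 h2S ⟨(hpm i e2).mpr (Or.inr (Or.inl ⟨rfl, Or.inr rfl⟩)), ?_⟩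
      intro h
      rcases (hpm e2 i).mp h with ⟨ha, _⟩ | ⟨ha, _⟩ | ⟨_, hb⟩
      · exact h2i ha
      · exact h2i ha
      · rcases hb with h' | h'
        · exact h1i h'.symm
        · exact h2i h'.symm
  have hcm : ∀ x y, pr.coalMinus C x y ↔
      ((x = e1 ∧ y = e1) ∨ (x = e1 ∧ (y = i ∨ y = e2)) ∨ (x = i ∧ (y = i ∨ y = e2)) ∨
        (x = e2 ∧ y = e2)) := by
    intro x y
    constructor
    · rintro (⟨hx, hxC, hy, hyC, _⟩ | ⟨⟨hx, hxC⟩, hy⟩ | ⟨h1, hy⟩ | ⟨hx, hxC, hy, hyC, _⟩)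
      · refine Or.inl ⟨?_, ?_⟩
        · rcases (hE x).mp hx with h | h
          · exact h
          · exact absurd (h ▸ hxC) h2C
        · rcases (hE y).mp hy with h | h
          · exact h
          · exact absurd (h ▸ hyC) h2C
      · refine Or.inr (Or.inl ⟨?_, ?_⟩)
        · rcases (hE x).mp hx with h | h
          · exact h
          · exact absurd (h ▸ hxC) h2C
        · rcases hy with h | ⟨hy, hyC⟩
          · exact Or.inl h
          · rcases (hE y).mp hy with h | h
            · exact absurd h1C (h ▸ hyC)
            · exact Or.inr h
      · refine Or.inr (Or.inr (Or.inl ⟨h1, ?_⟩))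
        rcases hy with h | ⟨hy, hyC⟩
        · exact Or.inl h
        · rcases (hE y).mp hy with h | h
          · exact absurd h1C (h ▸ hyC)
          · exact Or.inr h
      · refine Or.inr (Or.inr (Or.inr ⟨?_, ?_⟩))
        · rcases (hE x).mp hx with h | h
          · exact absurd h1C (h ▸ hxC)
          · exact h
        · rcases (hE y).mp hy with h | h
          · exact absurd h1C (h ▸ hyC)
          · exact h
    · rintro (⟨h1, h2⟩ | ⟨h1, hy⟩ | ⟨h1, hy⟩ | ⟨h1, h2⟩)
      · exact Or.inl ⟨(hE x).mpr (Or.inl h1), h1 ▸ h1C, (hE y).mpr (Or.inl h2), h2 ▸ h1C,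
          hRm' y x (Or.inl h2) (Or.inl h1)⟩
      · rcases hy with h | h
        · exact Or.inr (Or.inl ⟨⟨(hE x).mpr (Or.inl h1), h1 ▸ h1C⟩, Or.inl h⟩)
        · exact Or.inr (Or.inl ⟨⟨(hE x).mpr (Or.inl h1), h1 ▸ h1C⟩,
            Or.inr ⟨(hE y).mpr (Or.inr h), h ▸ h2C⟩⟩)
      · rcases hy with h | h
        · exact Or.inr (Or.inr (Or.inl ⟨h1, Or.inl h⟩))
        · exact Or.inr (Or.inr (Or.inl ⟨h1, Or.inr ⟨(hE y).mpr (Or.inr h), h ▸ h2C⟩⟩))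
      · exact Or.inr (Or.inr (Or.inr ⟨(hE x).mpr (Or.inr h1), h1 ▸ h2C,
          (hE y).mpr (Or.inr h2), h2 ▸ h2C, hRm' x y (Or.inr h1) (Or.inr h2)⟩))
  have hcmS : ∀ x y, strictOf (pr.coalMinus C) x y →
      ((x = e1 ∧ y = i) ∨ (x = e1 ∧ y = e2) ∨ (x = i ∧ y = e2)) := by
    rintro x y ⟨h1, h2⟩
    rcases (hcm x y).mp h1 with ⟨ha, hb⟩ | ⟨ha, hb⟩ | ⟨ha, hb⟩ | ⟨ha, hb⟩
    · exact absurd ((hcm y x).mpr (Or.inl ⟨hb, ha⟩)) h2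
    · rcases hb with h | h
      · exact Or.inl ⟨ha, h⟩
      · exact Or.inr (Or.inl ⟨ha, h⟩)
    · rcases hb with h | h
      · exact absurd ((hcm y x).mpr (Or.inr (Or.inr (Or.inl ⟨h, Or.inl ha⟩)))) h2
      · exact Or.inr (Or.inr ⟨ha, h⟩)
    · exact absurd ((hcm y x).mpr (Or.inr (Or.inr (Or.inr ⟨hb, ha⟩)))) h2
  have hB0 : IsLinExtOn (insert i pr.enemies) (pr.coalMinus C)
      (fun x y => (x = e1 ∧ (y = i ∨ y = e2)) ∨ (x = i ∧ y = e2)) := by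
    refine linext_three (fun x => (hmem x).trans (by tauto)) h1i h12 (Ne.symm h2i) ?_
    intro x y hs _ _
    rcases hcmS x y hs with ⟨ha, hb⟩ | ⟨ha, hb⟩ | ⟨ha, hb⟩
    · exact Or.inl ⟨ha, hb⟩
    · exact Or.inr (Or.inl ⟨ha, hb⟩)
    · exact Or.inr (Or.inr ⟨ha, hb⟩)
  have key : ∀ B, IsLinExtOn (insert i pr.enemies) (pr.coalMinus C) B →
      sInf { m : ℕ | ∃ A, IsLinExtOn (insert i pr.enemies) pr.prefMinus A ∧
        m = kendallTau (insert i pr.enemies) A B } = 1 := by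
    intro B hB
    have hBe1i : B e1 i := by
      refine hB.extend e1 h1S i hiS
        ⟨(hcm e1 i).mpr (Or.inr (Or.inl ⟨rfl, Or.inl rfl⟩)), ?_⟩
      intro h
      rcases (hcm i e1).mp h with ⟨ha, _⟩ | ⟨ha, _⟩ | ⟨_, hb⟩ | ⟨ha, _⟩
      · exact h1i ha.symm
      · exact h1i ha.symm
      · rcases hb with h' | h'
        · exact h1i h'
        · exact h12 h'
      · exact h2i ha.symm
    have hBie2 : B i e2 := by
      refine hB.extend i hiS e2 h2S
        ⟨(hcm i e2).mpr (Or.inr (Or.inr (Or.inl ⟨rfl, Or.inr rfl⟩))), ?_⟩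
      intro h
      rcases (hcm e2 i).mp h with ⟨ha, _⟩ | ⟨ha, _⟩ | ⟨ha, _⟩ | ⟨_, hb⟩
      · exact h12 ha.symm
      · exact h12 ha.symm
      · exact h2i ha
      · exact h2i hb.symm
    have hBe1e2 : B e1 e2 := by
      refine hB.extend e1 h1S e2 h2S
        ⟨(hcm e1 e2).mpr (Or.inr (Or.inl ⟨rfl, Or.inr rfl⟩)), ?_⟩
      intro h
      rcases (hcm e2 e1).mp h with ⟨ha, _⟩ | ⟨ha, _⟩ | ⟨ha, _⟩ | ⟨_, hb⟩
      · exact h12 ha.symm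
      · exact h12 ha.symm
      · exact h2i ha
      · exact h12 hb
    apply nat_sInf_eq
    · refine ⟨_, hA1, ?_⟩
      have hset : {p : P × P | p.1 ∈ insert i pr.enemies ∧ p.2 ∈ insert i pr.enemies ∧
          ((p.1 = i ∧ (p.2 = e1 ∨ p.2 = e2)) ∨ (p.1 = e1 ∧ p.2 = e2)) ∧ B p.2 p.1} =
          {((i : P), e1)} := by
        ext ⟨x, y⟩
        simp only [Set.mem_setOf_eq, Set.mem_singleton_iff, Prod.mk.injEq]
        constructor
        · rintro ⟨hx, hy, hA, hB'⟩
          rcases hA with ⟨h1, h2 | h2⟩ | ⟨h1, h2⟩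
          · exact ⟨h1, h2⟩
          · exact absurd (h1 ▸ h2 ▸ hB') (linext_asymm hB hiS h2S hBie2)
          · exact absurd (h1 ▸ h2 ▸ hB') (linext_asymm hB h1S h2S hBe1e2)
        · rintro ⟨h1, h2⟩
          exact ⟨(hmem x).mpr (Or.inl h1), (hmem y).mpr (Or.inr (Or.inl h2)),
            Or.inl ⟨h1, Or.inl h2⟩, by rw [h1, h2]; exact hBe1i⟩
      show 1 = kendallTau _ _ _
      unfold kendallTau
      rw [hset, Set.ncard_singleton]
    · rintro n ⟨A, hA, rfl⟩
      obtain ⟨hAie1, _⟩ := hAfor A hA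
      have hsub : ({((i : P), e1)} : Set (P × P)) ⊆
          {p : P × P | p.1 ∈ insert i pr.enemies ∧ p.2 ∈ insert i pr.enemies ∧
            A p.1 p.2 ∧ B p.2 p.1} := by
        rintro ⟨x, y⟩ h
        simp only [Set.mem_singleton_iff, Prod.mk.injEq] at h
        rcases h with ⟨h1, h2⟩
        exact ⟨(hmem x).mpr (Or.inl h1), (hmem y).mpr (Or.inr (Or.inl h2)),
          (by rw [h1, h2]; exact hAie1), (by rw [h1, h2]; exact hBe1i)⟩
      have := Set.ncard_le_ncard hsub (tau_set_finite (insert i pr.enemies) A B)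
      rw [Set.ncard_singleton] at this
      exact this
  apply nat_sSup_eq
  · exact ⟨_, hB0, (key _ hB0).symm⟩
  · rintro n ⟨B, hB, rfl⟩
    exact key B hB

end ComputeMinus2
section Combine
variable {P : Type*} [DecidableEq P] {i : P} (pr : FENPref P i)

lemma deltaMinus_eq {e1 e2 : P} (he : pr.enemies = {e1, e2}) (h12 : e1 ≠ e2)
    (h1i : e1 ≠ i) (h2i : e2 ≠ i)
    (hRm : ∀ x ∈ pr.enemies, ∀ y ∈ pr.enemies, pr.Rm x y) (C : Finset P) :
    pr.deltaMinus C = (if e1 ∈ C then 1 else 0) + (if e2 ∈ C then 1 else 0) := by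
  have he' : pr.enemies = {e2, e1} := by rw [he]; exact Finset.pair_comm e1 e2
  by_cases h1 : e1 ∈ C <;> by_cases h2 : e2 ∈ C
  · rw [deltaMinus_both pr he h12 h1i h2i hRm h1 h2]; simp [h1, h2]
  · rw [deltaMinus_one pr he h12 h1i h2i hRm h1 h2]; simp [h1, h2]
  · rw [deltaMinus_one pr he' (Ne.symm h12) h2i h1i hRm h2 h1]; simp [h1, h2]
  · rw [deltaMinus_none pr he h12 h1i h2i hRm h1 h2]; simp [h1, h2]

end Combine

/-! The decidable combinatorial core on `ZMod 5`. -/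

def costB (k : ZMod 5) (C : ZMod 5 → Bool) : ℕ :=
  (bif C (k + 1) then 0 else 1) + (bif C (k + 2) then 1 else 0) + (bif C (k + 3) then 1 else 0)

def tgtB (c : ZMod 5 → ZMod 5) : Option (ZMod 5) → ZMod 5 → Bool
  | none => fun _ => false
  | some j => fun x => c x == c j

def allB : List (ZMod 5) := [0, 1, 2, 3, 4]

def okB (c : ZMod 5 → ZMod 5) : Bool :=
  allB.any fun k =>
    (none :: allB.map some).any fun j =>
      decide (costB k (fun x => x == k || tgtB c j x) < costB k (fun x => c x == c k)) &&
      allB.all fun m => !tgtB c j m ||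
        decide (costB m (fun x => x == k || tgtB c j x) ≤ costB m (tgtB c j))

set_option maxRecDepth 10000 in
set_option maxHeartbeats 3200000 in
theorem coreB : ∀ a b d e f : ZMod 5, okB (fun x => if x = 0 then a else if x = 1 then b
    else if x = 2 then d else if x = 3 then e else f) = true := by decide

lemma okB_true (c : ZMod 5 → ZMod 5) : okB c = true := by
  have h := coreB (c 0) (c 1) (c 2) (c 3) (c 4)
  have hfun : (fun x : ZMod 5 => if x = 0 then c 0 else if x = 1 then c 1
      else if x = 2 then c 2 else if x = 3 then c 3 else c 4) = c := by
    funext x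
    fin_cases x <;> rfl
  rwa [hfun] at h

lemma allB_mem (m : ZMod 5) : m ∈ allB := by fin_cases m <;> simp [allB] <;> exact List.mem_of_elem_eq_true rfl

lemma core_prop (c : ZMod 5 → ZMod 5) : ∃ k : ZMod 5, ∃ j : Option (ZMod 5),
    costB k (fun x => x == k || tgtB c j x) < costB k (fun x => c x == c k) ∧
    ∀ m : ZMod 5, tgtB c j m = true →
      costB m (fun x => x == k || tgtB c j x) ≤ costB m (tgtB c j) := by
  have h := okB_true c
  unfold okB at h
  rw [List.any_eq_true] at h
  obtain ⟨k, _, h⟩ := h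
  rw [List.any_eq_true] at h
  obtain ⟨j, _, h⟩ := h
  rw [Bool.and_eq_true, decide_eq_true_eq, List.all_eq_true] at h
  refine ⟨k, j, h.1, ?_⟩
  intro m hm
  have h2 := h.2 m (allB_mem m)
  rw [Bool.or_eq_true, Bool.not_eq_true', decide_eq_true_eq] at h2
  rcases h2 with h2 | h2
  · rw [hm] at h2; exact absurd h2 (by simp)
  · exact h2

/-- The FEN-hedonic game with distance-based preferences on the five players `ZMod 5`,
where each player `k` has the single friend `k+1` and the two mutually indifferent
enemies `k+2` and `k+3`, admits no individually stable coalition structure, and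
consequently no Nash stable coalition structure. -/
theorem no_individually_stable_five_cycle (pr : ∀ k : ZMod 5, FENPref (ZMod 5) k)
    (hf : ∀ k : ZMod 5, (pr k).friends = {k + 1})
    (he : ∀ k : ZMod 5, (pr k).enemies = {k + 2, k + 3})
    (hindiff : ∀ k : ZMod 5, ∀ x ∈ (pr k).enemies, ∀ y ∈ (pr k).enemies, (pr k).Rm x y) :
    ∀ Γ : Finset (Finset (ZMod 5)), IsCoalitionStructure Γ →
      ¬ IndividuallyStable pr Γ ∧ ¬ NashStable pr Γ := by
  intro Γ hΓ
  obtain ⟨hne, hex⟩ := hΓ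
  choose Bk hBk hU using hex
  have minc : ∀ {s t : Finset ℕ} (hs : s.Nonempty) (ht : t.Nonempty),
      s = t → s.min' hs = t.min' ht := by
    rintro s t hs ht rfl; rfl
  have hBne : ∀ k, ((Bk k).image ZMod.val).Nonempty :=
    fun k => ⟨_, Finset.mem_image_of_mem _ (hBk k).2⟩
  set c : ZMod 5 → ZMod 5 :=
    fun k => ((((Bk k).image ZMod.val).min' (hBne k) : ℕ) : ZMod 5) with hc
  have hcmem : ∀ k, c k ∈ Bk k := by
    intro k
    have h := Finset.min'_mem ((Bk k).image ZMod.val) (hBne k)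
    rw [Finset.mem_image] at h
    obtain ⟨a, ha, hval⟩ := h
    have : c k = a := by
      show (((Finset.image ZMod.val (Bk k)).min' (hBne k) : ℕ) : ZMod 5) = a
      rw [← hval]
      exact ZMod.natCast_rightInverse a
    rwa [this]
  have hsame : ∀ k x, x ∈ Bk k → Bk x = Bk k :=
    fun k x hx => (hU x (Bk k) ⟨(hBk k).1, hx⟩).symm
  have hblk : ∀ k x, c x = c k ↔ x ∈ Bk k := by
    intro k x
    constructor
    · intro h
      have h2 : c x ∈ Bk k := by rw [h]; exact hcmem k
      have e1 : Bk (c x) = Bk x := hsame x (c x) (hcmem x)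
      have e2 : Bk (c x) = Bk k := hsame k (c x) h2
      have e3 : Bk x = Bk k := e1.symm.trans e2
      rw [← e3]; exact (hBk x).2
    · intro hx
      have e3 : Bk x = Bk k := hsame k x hx
      show (((Finset.image ZMod.val (Bk x)).min' (hBne x) : ℕ) : ZMod 5) =
        (((Finset.image ZMod.val (Bk k)).min' (hBne k) : ℕ) : ZMod 5)
      exact congrArg _ (minc _ _ (by rw [e3]))
  have hdelta : ∀ (k : ZMod 5) (C : Finset (ZMod 5)) (g : ZMod 5 → Bool),
      (∀ x, g x = true ↔ x ∈ C) → (pr k).delta C = costB k g := by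
    intro k C g hg
    have h1k : (k + 1 : ZMod 5) ≠ k := fun h => absurd (add_eq_left.mp h) (by decide)
    have h23 : (k + 2 : ZMod 5) ≠ k + 3 := fun h => absurd (add_left_cancel h) (by decide)
    have h2k : (k + 2 : ZMod 5) ≠ k := fun h => absurd (add_eq_left.mp h) (by decide)
    have h3k : (k + 3 : ZMod 5) ≠ k := fun h => absurd (add_eq_left.mp h) (by decide)
    rw [FENPref.delta, deltaPlus_eq (pr k) (hf k) h1k C,
      deltaMinus_eq (pr k) (he k) h23 h2k h3k (hindiff k) C]
    simp only [costB, Bool.cond_eq_ite, hg]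
    by_cases a : k + 1 ∈ C <;> by_cases b : k + 2 ∈ C <;> by_cases d : k + 3 ∈ C <;>
      simp [a, b, d]
  obtain ⟨k, j, hlt, hcons⟩ := core_prop c
  have hgC : ∀ x, tgtB c j x = true ↔ x ∈ j.elim ∅ Bk := by
    cases j with
    | none => intro x; simp [tgtB]
    | some j' => intro x; simp only [tgtB, Option.elim, beq_iff_eq]; exact hblk j' x
  have hgC' : ∀ x, (x == k || tgtB c j x) = true ↔ x ∈ insert k (j.elim ∅ Bk) := by
    intro x
    rw [Bool.or_eq_true, beq_iff_eq, Finset.mem_insert, hgC x]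
  have hgk : ∀ x, (c x == c k) = true ↔ x ∈ Bk k := by
    intro x; rw [beq_iff_eq]; exact hblk k x
  have hΓCj : j.elim ∅ Bk ∈ Γ ∨ j.elim ∅ Bk = ∅ := by
    cases j with
    | none => exact Or.inr rfl
    | some j' => exact Or.inl ((hBk j').1)
  have hd1 : (pr k).delta (insert k (j.elim ∅ Bk)) < (pr k).delta (Bk k) := by
    rw [hdelta k (insert k (j.elim ∅ Bk)) _ hgC', hdelta k (Bk k) _ hgk]
    exact hlt
  have hd2 : ∀ m ∈ j.elim ∅ Bk, (pr m).delta (insert k (j.elim ∅ Bk)) ≤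
      (pr m).delta (j.elim ∅ Bk) := by
    intro m hm
    rw [hdelta m (insert k (j.elim ∅ Bk)) _ hgC', hdelta m (j.elim ∅ Bk) _ hgC]
    exact hcons m ((hgC m).mpr hm)
  constructor
  · intro hIS
    exact hIS ⟨k, Bk k, j.elim ∅ Bk, (hBk k).1, (hBk k).2, hΓCj, hd1, hd2⟩
  · intro hNS
    exact hNS ⟨k, Bk k, j.elim ∅ Bk, (hBk k).1, (hBk k).2, hΓCj, hd1⟩
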